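/- Let a, b, c ∈ [0,1]. There exists a distribution P on (ZMod 2)^2 with edge marginals d₂P = a, d₀P = b and d₁P = c if and only if |a + b − 1| ≤ c ≤ 1 − |a − b|. Consequently, for every a, b ∈ [0,1] there exists a distribution P on (ZMod 2)^2 with d₂P = a and d₀P = b; that is, every distribution on the horn Λ²₁ extends to the 2-simplex. -/

import Mathlib

open Finset

/-- A distribution on `(ZMod 2)²`: nonnegative with total mass 1. -/
def IsDist2 (p : ZMod 2 → ZMod 2 → ℝ) : Prop :=
  (∀ a b, 0 ≤ p a b) ∧ (∑ a : ZMod 2, ∑ b : ZMod 2, p a b = 1)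

/-- The `d₀` edge marginal (at outcome `0`) of a distribution on a triangle. -/
def faceD0 (p : ZMod 2 → ZMod 2 → ℝ) : ℝ := p 0 0 + p 1 0

/-- The `d₁` edge marginal (at outcome `0`) of a distribution on a triangle. -/
def faceD1 (p : ZMod 2 → ZMod 2 → ℝ) : ℝ := p 0 0 + p 1 1

/-- The `d₂` edge marginal (at outcome `0`) of a distribution on a triangle. -/
def faceD2 (p : ZMod 2 → ZMod 2 → ℝ) : ℝ := p 0 0 + p 0 1

lemma sum_zmod2 (f : ZMod 2 → ℝ) : ∑ a : ZMod 2, f a = f 0 + f 1 :=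
  Fin.sum_univ_two f

lemma key (a b c : ℝ) (ha : a ∈ Set.Icc (0 : ℝ) 1) (hb : b ∈ Set.Icc (0 : ℝ) 1)
    (hc : |a + b - 1| ≤ c ∧ c ≤ 1 - |a - b|) :
    ∃ P : ZMod 2 → ZMod 2 → ℝ,
      IsDist2 P ∧ faceD2 P = a ∧ faceD0 P = b ∧ faceD1 P = c := by
  obtain ⟨h1, h2⟩ := hc
  have hge : a + b - 1 ≤ c := (le_abs_self _).trans h1
  have hge' : -(a + b - 1) ≤ c := (neg_le_abs _).trans h1
  have hle1 : a - b ≤ 1 - c := by linarith [le_abs_self (a - b)]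
  have hle2 : b - a ≤ 1 - c := by linarith [neg_le_abs (a - b)]
  set t : ℝ := (c + a + b - 1) / 2 with ht
  refine ⟨fun x y => if x = 0 then (if y = 0 then t else a - t)
      else (if y = 0 then b - t else 1 - a - b + t), ⟨?_, ?_⟩, ?_, ?_, ?_⟩
  · intro x y
    by_cases hx : x = 0 <;> by_cases hy : y = 0 <;> simp [hx, hy] <;> linarith
  · rw [sum_zmod2]
    simp only [sum_zmod2]
    norm_num
  · simp [faceD2]
  · simp only [faceD0]; norm_num
  · simp only [faceD1]; norm_num; ring

/-- **Extension of edge distributions to the triangle, and horn filling.**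
For `a, b, c ∈ [0,1]`: a distribution on `(ZMod 2)²` with marginals `d₂ = a`, `d₀ = b`,
`d₁ = c` exists iff `|a + b - 1| ≤ c ≤ 1 - |a - b|`.  Consequently any distribution on
the horn `Λ²₁` (i.e. any pair `a, b ∈ [0,1]`) extends to a distribution on `Δ²`. -/
theorem triangle_extension :
    (∀ a b c : ℝ, a ∈ Set.Icc (0 : ℝ) 1 → b ∈ Set.Icc (0 : ℝ) 1 → c ∈ Set.Icc (0 : ℝ) 1 →
      ((∃ P : ZMod 2 → ZMod 2 → ℝ,
          IsDist2 P ∧ faceD2 P = a ∧ faceD0 P = b ∧ faceD1 P = c) ↔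
        (|a + b - 1| ≤ c ∧ c ≤ 1 - |a - b|))) ∧
    (∀ a b : ℝ, a ∈ Set.Icc (0 : ℝ) 1 → b ∈ Set.Icc (0 : ℝ) 1 →
      ∃ P : ZMod 2 → ZMod 2 → ℝ, IsDist2 P ∧ faceD2 P = a ∧ faceD0 P = b) := by
  constructor
  · intro a b c ha hb hc
    constructor
    · rintro ⟨P, ⟨hpos, hsum⟩, h2, h0, h1⟩
      simp only [sum_zmod2] at hsum
      have q00 := hpos 0 0; have q01 := hpos 0 1; have q10 := hpos 1 0; have q11 := hpos 1 1
      unfold faceD0 at h0; unfold faceD1 at h1; unfold faceD2 at h2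
      constructor
      · rw [abs_le]; constructor <;> linarith
      · have : |a - b| ≤ 1 - c := abs_le.mpr ⟨by linarith, by linarith⟩
        linarith
    · exact key a b c ha hb
  · intro a b ha hb
    obtain ⟨ha0, ha1⟩ := ha; obtain ⟨hb0, hb1⟩ := hb
    have hup : |a + b - 1| ≤ 1 - |a - b| := by
      rcases abs_cases (a + b - 1) with ⟨e, _⟩ | ⟨e, _⟩ <;>
        rcases abs_cases (a - b) with ⟨e', _⟩ | ⟨e', _⟩ <;> rw [e, e'] <;> linarith
    obtain ⟨P, hP, h2, h0, -⟩ := key a b (|a + b - 1|) ⟨ha0, ha1⟩ ⟨hb0, hb1⟩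
      ⟨le_refl _, hup⟩
    exact ⟨P, hP, h2, h0⟩
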